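/- Fix ν > 0 and R > 0, and for C > 0 let Ω(C,ν) = { ω ∈ ℝⁿ : ∀ I ∈ ℤⁿ \ {0}, |(ω,I)| ≥ C/‖I‖^{n-1+ν} }. Then there exists a constant k = k(n,ν,R) such that the Lebesgue measure of B_R \ Ω(C,ν) is at most k·C, where B_R is the ball of radius R. -/

import Mathlib

open MeasureTheory

/-- The set `Ω(C,ν)` of frequency vectors satisfying Kolmogorov's Diophantine
condition `K(C,ν)`. -/
def KolmogorovSet (n : ℕ) (C ν : ℝ) : Set (EuclideanSpace ℝ (Fin n)) :=
  {ω | ∀ I : Fin n → ℤ, I ≠ 0 →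
    C / (Real.sqrt (∑ i, ((I i : ℝ)) ^ 2)) ^ ((n : ℝ) - 1 + ν) ≤ |∑ i, ω i * (I i : ℝ)|}

lemma coord_abs_le_norm {n : ℕ} (x : EuclideanSpace ℝ (Fin n)) (i : Fin n) : |x i| ≤ ‖x‖ := by
  rw [EuclideanSpace.norm_eq, ← Real.sqrt_sq_eq_abs]
  apply Real.sqrt_le_sqrt
  have := Finset.single_le_sum (f := fun j => ‖x j‖ ^ 2) (fun j _ => sq_nonneg _)
    (Finset.mem_univ i)
  simpa [Real.norm_eq_abs, sq_abs] using this

lemma slab_bound {n : ℕ} {R : ℝ} (hR : 0 ≤ R) (v : EuclideanSpace ℝ (Fin n)) (hv : v ≠ 0)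
    {ε : ℝ} (hε : 0 ≤ ε) :
    volume {ω : EuclideanSpace ℝ (Fin n) |
        ω ∈ Metric.closedBall 0 R ∧ |(inner ℝ ω v : ℝ)| ≤ ε}
      ≤ ENNReal.ofReal (2 * (ε / ‖v‖)) * ENNReal.ofReal (2 * R) ^ (n - 1) := by
  have hn : n ≠ 0 := by
    rintro rfl
    exact hv (Subsingleton.elim _ _)
  have hvn : 0 < ‖v‖ := norm_pos_iff.mpr hv
  obtain ⟨i₀⟩ : Nonempty (Fin n) := ⟨⟨0, Nat.pos_of_ne_zero hn⟩⟩
  set u : EuclideanSpace ℝ (Fin n) := ‖v‖⁻¹ • v with hu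
  have hun : ‖u‖ = 1 := by
    rw [hu, norm_smul, norm_inv, norm_norm, inv_mul_cancel₀ hvn.ne']
  have horth : Orthonormal ℝ (Set.restrict {i₀} (fun _ : Fin n => u)) := by
    constructor
    · intro i; exact hun
    · intro i j hij
      exact absurd (Subtype.ext (by
        have hi := i.2; have hj := j.2
        simp only [Set.mem_singleton_iff] at hi hj
        rw [hi, hj])) hij
  obtain ⟨b, hb⟩ := horth.exists_orthonormalBasis_extension_of_card_eq
    (by simp [finrank_euclideanSpace])
  have hbi₀ : b i₀ = u := hb i₀ rfl
  set c : ℝ := ε / ‖v‖ with hc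
  classical
  set hi : Fin n → ℝ := fun i => if i = i₀ then c else R with hhi
  have hi_i₀ : hi i₀ = c := by simp [hhi]
  have hi_ne : ∀ i, i ≠ i₀ → hi i = R := fun i h => by simp [hhi, h]
  have hF : MeasurePreserving
      ((MeasurableEquiv.toLp 2 (Fin n → ℝ)).symm ∘ ⇑b.repr) volume volume :=
    (EuclideanSpace.volume_preserving_symm_measurableEquiv_toLp (Fin n)).comp
      b.measurePreserving_repr
  have hsub : {ω : EuclideanSpace ℝ (Fin n) |
      ω ∈ Metric.closedBall 0 R ∧ |(inner ℝ ω v : ℝ)| ≤ ε}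
      ⊆ ((MeasurableEquiv.toLp 2 (Fin n → ℝ)).symm ∘ ⇑b.repr) ⁻¹' (Set.Icc (-hi) hi) := by
    rintro ω ⟨hω1, hω2⟩
    have hωR : ‖ω‖ ≤ R := by simpa using hω1
    have key : ∀ i, |b.repr ω i| ≤ hi i := by
      intro i
      have hrepr : b.repr ω i = inner ℝ (b i) ω := b.repr_apply_apply ω i
      by_cases h : i = i₀
      · rw [hrepr, h, hbi₀, hi_i₀, hu]
        have h2 : (inner ℝ (‖v‖⁻¹ • v) ω : ℝ) = ‖v‖⁻¹ * inner ℝ v ω :=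
          real_inner_smul_left v ω _
        rw [h2, hc, abs_mul, abs_of_nonneg (inv_nonneg.mpr hvn.le),
          real_inner_comm ω v, div_eq_inv_mul]
        exact mul_le_mul_of_nonneg_left hω2 (inv_nonneg.mpr hvn.le)
      · rw [hi_ne i h, hrepr]
        calc |(inner ℝ (b i) ω : ℝ)| ≤ ‖b i‖ * ‖ω‖ := abs_real_inner_le_norm _ _
          _ = ‖ω‖ := by rw [b.orthonormal.1 i, one_mul]
          _ ≤ R := hωR
    simp only [Set.mem_preimage, Set.mem_Icc, Pi.le_def, Function.comp_apply, Pi.neg_apply]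
    constructor <;> intro i <;> have h3 := abs_le.mp (key i)
    · exact h3.1
    · exact h3.2
  calc volume {ω : EuclideanSpace ℝ (Fin n) |
        ω ∈ Metric.closedBall 0 R ∧ |(inner ℝ ω v : ℝ)| ≤ ε}
      ≤ volume (((MeasurableEquiv.toLp 2 (Fin n → ℝ)).symm ∘ ⇑b.repr) ⁻¹' (Set.Icc (-hi) hi)) :=
        measure_mono hsub
    _ = volume (Set.Icc (-hi) hi) := hF.measure_preimage measurableSet_Icc.nullMeasurableSet
    _ = ∏ i, ENNReal.ofReal (hi i - (-hi) i) := Real.volume_Icc_pi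
    _ = ENNReal.ofReal (2 * c) * ENNReal.ofReal (2 * R) ^ (n - 1) := by
        rw [← Finset.mul_prod_erase Finset.univ _ (Finset.mem_univ i₀)]
        congr 1
        · rw [Pi.neg_apply, hi_i₀]
          congr 1; ring
        · have hprod2 : ∀ i ∈ Finset.univ.erase i₀,
              ENNReal.ofReal (hi i - (-hi) i) = ENNReal.ofReal (2 * R) := by
            intro i hi'
            have hne : i ≠ i₀ := (Finset.mem_erase.mp hi').1
            rw [Pi.neg_apply, hi_ne i hne]
            congr 1; ring
          rw [Finset.prod_congr rfl hprod2,
            Finset.prod_const, Finset.card_erase_of_mem (Finset.mem_univ i₀),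
            Finset.card_univ, Fintype.card_fin]

lemma tsum_pi_prod (g : ℤ → ENNReal) (n : ℕ) :
    ∑' I : Fin n → ℤ, ∏ i, g (I i) = (∑' j, g j) ^ n := by
  induction n with
  | zero =>
    rw [tsum_eq_single (0 : Fin 0 → ℤ) (fun b hb => absurd (Subsingleton.elim b 0) hb)]
    simp
  | succ n ih =>
    rw [← Equiv.tsum_eq (Fin.consEquiv fun _ : Fin (n + 1) => ℤ), ENNReal.tsum_prod']
    have h : ∀ (a : ℤ) (bb : Fin n → ℤ),
        ∏ i, g (((Fin.consEquiv fun _ : Fin (n + 1) => ℤ) (a, bb)) i)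
          = g a * ∏ i, g (bb i) := by
      intro a bb
      rw [Fin.prod_univ_succ]
      simp [Fin.consEquiv]
    simp_rw [h, ENNReal.tsum_mul_left, ENNReal.tsum_mul_right, ih, pow_succ]
    ring

lemma int_tsum_ne_top {p : ℝ} (hp : 1 < p) :
    ∑' j : ℤ, ENNReal.ofReal ((max |(j : ℝ)| 1) ^ (-p)) ≠ ⊤ := by
  have hnat : Summable (fun m : ℕ => (max (m : ℝ) 1) ^ (-p)) := by
    have h1 : Summable (fun m : ℕ => ((m : ℝ)) ^ (-p)) :=
      Real.summable_nat_rpow.mpr (by linarith)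
    refine (summable_nat_add_iff 1).mp ?_
    refine ((summable_nat_add_iff 1).mpr h1).congr fun m => ?_
    have : max ((m + 1 : ℕ) : ℝ) 1 = ((m + 1 : ℕ) : ℝ) := by
      rw [max_eq_left]
      exact_mod_cast Nat.one_le_iff_ne_zero.mpr (Nat.succ_ne_zero m)
    rw [this]
  have hs : Summable (fun j : ℤ => (max |(j : ℝ)| 1) ^ (-p)) := by
    apply Summable.of_nat_of_neg
    · refine hnat.congr fun m => ?_
      have : |(((m : ℤ)) : ℝ)| = (m : ℝ) := by
        push_cast
        exact abs_of_nonneg (by positivity)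
      rw [this]
    · refine hnat.congr fun m => ?_
      congr 1
      congr 1
      push_cast
      rw [abs_neg]
      exact (abs_of_nonneg (by positivity)).symm
  rw [← ENNReal.ofReal_tsum_of_nonneg
    (fun j => Real.rpow_nonneg (le_trans zero_le_one (le_max_right _ _)) _) hs]
  exact ENNReal.ofReal_ne_top

theorem stmt_5 (n : ℕ) (ν R : ℝ) (hν : 0 < ν) (hR : 0 < R) :
    ∃ k : ℝ, ∀ C > (0:ℝ),
      volume (Metric.closedBall (0 : EuclideanSpace ℝ (Fin n)) R \ KolmogorovSet n C ν)
        ≤ ENNReal.ofReal (k * C) := by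
  classical
  rcases Nat.eq_zero_or_pos n with hn | hn
  · subst hn
    refine ⟨0, fun C hC => ?_⟩
    have huniv : KolmogorovSet 0 C ν = Set.univ := by
      ext ω
      simp only [KolmogorovSet, Set.mem_setOf_eq, Set.mem_univ, iff_true]
      intro I hI
      exact absurd (Subsingleton.elim I 0) hI
    simp [huniv]
  · have hn' : (n : ℝ) ≠ 0 := Nat.cast_ne_zero.mpr hn.ne'
    set p : ℝ := 1 + ν / n with hp
    have hp1 : 1 < p := by
      have : 0 < ν / n := div_pos hν (by exact_mod_cast hn)
      rw [hp]; linarith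
    have hp0 : 0 ≤ p := by linarith
    set g : ℤ → ENNReal := fun j => ENNReal.ofReal ((max |(j : ℝ)| 1) ^ (-p)) with hg
    set S : ENNReal := ∑' I : Fin n → ℤ, ∏ i, g (I i) with hS
    have hSne : S ≠ ⊤ := by
      rw [hS, tsum_pi_prod]
      exact ENNReal.pow_ne_top (int_tsum_ne_top hp1)
    refine ⟨2 * (2 * R) ^ (n - 1) * S.toReal, fun C hC => ?_⟩
    have vv : (Fin n → ℤ) → EuclideanSpace ℝ (Fin n) := fun I => WithLp.toLp 2 (fun i => (I i : ℝ))
    set vv : (Fin n → ℤ) → EuclideanSpace ℝ (Fin n) := fun I => WithLp.toLp 2 (fun i => (I i : ℝ)) with hvv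
    set T : (Fin n → ℤ) → Set (EuclideanSpace ℝ (Fin n)) := fun I =>
      if I = 0 then ∅ else
        {ω | ω ∈ Metric.closedBall 0 R ∧
          |(inner ℝ ω (vv I) : ℝ)| ≤ C / ‖vv I‖ ^ ((n : ℝ) - 1 + ν)}
      with hT
    have hnorm : ∀ I : Fin n → ℤ,
        Real.sqrt (∑ i, ((I i : ℝ)) ^ 2) = ‖vv I‖ := by
      intro I
      rw [EuclideanSpace.norm_eq]
      congr 1
      refine Finset.sum_congr rfl fun i _ => ?_
      simp [hvv, Real.norm_eq_abs, sq_abs]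
    have hvne : ∀ I : Fin n → ℤ, I ≠ 0 → vv I ≠ 0 := by
      intro I hI h0
      apply hI
      funext i
      have : ((I i : ℝ)) = 0 := by simpa [hvv] using congrArg (fun x => x i) h0
      exact_mod_cast this
    have hinner : ∀ (ω : EuclideanSpace ℝ (Fin n)) (I : Fin n → ℤ),
        (inner ℝ ω (vv I) : ℝ) = ∑ i, ω i * (I i : ℝ) := by
      intro ω I
      rw [PiLp.inner_apply]
      simp [hvv, RCLike.inner_apply, conj_trivial, mul_comm]
    have hcover : Metric.closedBall (0 : EuclideanSpace ℝ (Fin n)) R \ KolmogorovSet n C ν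
        ⊆ ⋃ I : Fin n → ℤ, T I := by
      rintro ω ⟨hω1, hω2⟩
      simp only [KolmogorovSet, Set.mem_setOf_eq, not_forall] at hω2
      obtain ⟨I, hI0, hI⟩ := hω2
      refine Set.mem_iUnion.mpr ⟨I, ?_⟩
      simp only [hT, if_neg hI0]
      refine ⟨hω1, ?_⟩
      rw [hinner, ← hnorm]
      exact le_of_not_ge hI
    have hbound : ∀ I : Fin n → ℤ,
        volume (T I) ≤ (ENNReal.ofReal (2 * C) * ENNReal.ofReal (2 * R) ^ (n - 1))
          * ∏ i, g (I i) := by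
      intro I
      by_cases hI0 : I = 0
      · simp [hT, hI0]
      · have hv0 : vv I ≠ 0 := hvne I hI0
        have hvpos : 0 < ‖vv I‖ := norm_pos_iff.mpr hv0
        have hv1 : 1 ≤ ‖vv I‖ := by
          obtain ⟨i, hii⟩ : ∃ i, I i ≠ 0 := by
            by_contra h
            push_neg at h
            exact hI0 (funext h)
          calc (1 : ℝ) ≤ |(I i : ℝ)| := by
                exact_mod_cast Int.one_le_abs hii
            _ = |vv I i| := rfl
            _ ≤ ‖vv I‖ := coord_abs_le_norm (vv I) i
        have hε : 0 ≤ C / ‖vv I‖ ^ ((n : ℝ) - 1 + ν) :=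
          div_nonneg hC.le (Real.rpow_nonneg hvpos.le _)
        have h1 : volume (T I)
            ≤ ENNReal.ofReal (2 * (C / ‖vv I‖ ^ ((n : ℝ) - 1 + ν) / ‖vv I‖))
              * ENNReal.ofReal (2 * R) ^ (n - 1) := by
          rw [hT]
          simp only [if_neg hI0]
          exact slab_bound hR.le (vv I) hv0 hε
        refine h1.trans ?_
        have key : ENNReal.ofReal (2 * (C / ‖vv I‖ ^ ((n : ℝ) - 1 + ν) / ‖vv I‖))
            ≤ ENNReal.ofReal (2 * C) * ∏ i, g (I i) := by
          have heq : 2 * (C / ‖vv I‖ ^ ((n : ℝ) - 1 + ν) / ‖vv I‖)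
              = (2 * C) * ‖vv I‖ ^ (-((n : ℝ) + ν)) := by
            rw [div_div, ← Real.rpow_add_one hvpos.ne' ((n : ℝ) - 1 + ν)]
            have he : (n : ℝ) - 1 + ν + 1 = (n : ℝ) + ν := by ring
            rw [he, Real.rpow_neg hvpos.le]
            ring
          rw [heq, ENNReal.ofReal_mul (by positivity)]
          gcongr
          set m : Fin n → ℝ := fun i => max |(I i : ℝ)| 1 with hm
          have hm1 : ∀ i, 1 ≤ m i := fun i => le_max_right _ _
          have hmv : ∀ i, m i ≤ ‖vv I‖ := fun i =>
            max_le (coord_abs_le_norm (vv I) i) hv1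
          have hprod : ∏ i, m i ^ p ≤ ‖vv I‖ ^ ((n : ℝ) + ν) := by
            calc ∏ i, m i ^ p ≤ ∏ _i : Fin n, ‖vv I‖ ^ p := by
                  apply Finset.prod_le_prod
                  · intro i _; exact Real.rpow_nonneg (by linarith [hm1 i]) _
                  · intro i _
                    exact Real.rpow_le_rpow (by linarith [hm1 i]) (hmv i) hp0
              _ = (‖vv I‖ ^ p) ^ (n : ℕ) := by rw [Finset.prod_const, Finset.card_univ,
                    Fintype.card_fin]
              _ = ‖vv I‖ ^ (p * n) := by
                  rw [Real.rpow_mul hvpos.le, Real.rpow_natCast]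
              _ = ‖vv I‖ ^ ((n : ℝ) + ν) := by
                  congr 1
                  rw [hp]
                  field_simp
          have hppos : 0 < ∏ i, m i ^ p :=
            Finset.prod_pos fun i _ => Real.rpow_pos_of_pos (by linarith [hm1 i]) _
          have hreal : ‖vv I‖ ^ (-((n : ℝ) + ν)) ≤ ∏ i, m i ^ (-p) := by
            have h4 : (‖vv I‖ ^ ((n : ℝ) + ν))⁻¹ ≤ (∏ i, m i ^ p)⁻¹ :=
              inv_anti₀ hppos hprod
            rw [Real.rpow_neg hvpos.le]
            refine h4.trans (le_of_eq ?_)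
            rw [← Finset.prod_inv_distrib]
            refine Finset.prod_congr rfl fun i _ => ?_
            rw [Real.rpow_neg (by linarith [hm1 i])]
          calc ENNReal.ofReal (‖vv I‖ ^ (-((n : ℝ) + ν)))
              ≤ ENNReal.ofReal (∏ i, m i ^ (-p)) := ENNReal.ofReal_le_ofReal hreal
            _ = ∏ i, ENNReal.ofReal (m i ^ (-p)) :=
                ENNReal.ofReal_prod_of_nonneg fun i _ =>
                  Real.rpow_nonneg (by linarith [hm1 i]) _
            _ = ∏ i, g (I i) := rfl
        calc ENNReal.ofReal (2 * (C / ‖vv I‖ ^ ((n : ℝ) - 1 + ν) / ‖vv I‖))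
              * ENNReal.ofReal (2 * R) ^ (n - 1)
            ≤ (ENNReal.ofReal (2 * C) * ∏ i, g (I i)) * ENNReal.ofReal (2 * R) ^ (n - 1) :=
              mul_le_mul_left key _
          _ = (ENNReal.ofReal (2 * C) * ENNReal.ofReal (2 * R) ^ (n - 1)) * ∏ i, g (I i) := by
              ring
    calc volume (Metric.closedBall (0 : EuclideanSpace ℝ (Fin n)) R \ KolmogorovSet n C ν)
        ≤ volume (⋃ I : Fin n → ℤ, T I) := measure_mono hcover
      _ ≤ ∑' I : Fin n → ℤ, volume (T I) := measure_iUnion_le T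
      _ ≤ ∑' I : Fin n → ℤ, (ENNReal.ofReal (2 * C) * ENNReal.ofReal (2 * R) ^ (n - 1))
            * ∏ i, g (I i) := ENNReal.tsum_le_tsum hbound
      _ = (ENNReal.ofReal (2 * C) * ENNReal.ofReal (2 * R) ^ (n - 1)) * S := by
          rw [ENNReal.tsum_mul_left, hS]
      _ = ENNReal.ofReal (2 * C * (2 * R) ^ (n - 1)) * S := by
          rw [← ENNReal.ofReal_pow (by positivity : (0:ℝ) ≤ 2 * R),
            ← ENNReal.ofReal_mul (by positivity)]
      _ = ENNReal.ofReal (2 * C * (2 * R) ^ (n - 1)) * ENNReal.ofReal S.toReal := by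
          rw [ENNReal.ofReal_toReal hSne]
      _ = ENNReal.ofReal (2 * C * (2 * R) ^ (n - 1) * S.toReal) :=
          (ENNReal.ofReal_mul (by positivity)).symm
      _ ≤ ENNReal.ofReal (2 * (2 * R) ^ (n - 1) * S.toReal * C) := by
          apply ENNReal.ofReal_le_ofReal
          apply le_of_eq
          ring
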